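/- Let H = (A, B, E) be a finite undirected bipartite graph and let Q ⊆ E be such that for every connected component D of H, the graph obtained from D by deleting the edges of Q (keeping all vertices of D) is connected. Then for every y : E → ℝ there exists a vector z in the cycle space of H (the linear span in ℝ^E of all direction-blindly labeled edge-simple cycles of H) such that z(e) = y(e) for every e ∈ Q. -/

import Mathlib

variable {R C : Type*}

/-- Direction-blind adjacency in the bipartite graph on `R ⊕ C` via an edge in `S`. -/
def Adj (S : Set (R × C)) (v w : R ⊕ C) : Prop :=
  ∃ e ∈ S, (v = Sum.inl e.1 ∧ w = Sum.inr e.2) ∨ (v = Sum.inr e.2 ∧ w = Sum.inl e.1)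

/-- Connectivity in the bipartite graph on `R ⊕ C` via edges in `S`. -/
def Conn (S : Set (R × C)) : (R ⊕ C) → (R ⊕ C) → Prop :=
  Relation.ReflTransGen (Adj S)

/-- `D` is a connected component of the bipartite graph with edge set `S`. -/
def IsCC (S : Set (R × C)) (D : Set (R ⊕ C)) : Prop :=
  ∃ v, D = {w | Conn S v w}

/-- All vertices of `D` are joined by paths using edges in `S`. -/
def ConnectedOn (S : Set (R × C)) (D : Set (R ⊕ C)) : Prop :=
  ∀ v ∈ D, ∀ w ∈ D, Conn S v w

/-- `z` is a direction-blindly labeled edge-simple cycle of the bipartite graph with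
edge set `S`: the cycle visits rows `r 0, …, r (k-1)` and columns `c 0, …, c (k-1)`,
using the `2k` pairwise distinct edges `(r t, c t)` (labeled `+1`) and
`(r (t+1), c t)` (labeled `-1`); `z` is `0` off the cycle. -/
def IsDBCycle {R C : Type*} (S : Set (R × C)) (z : R × C → ℝ) : Prop :=
  ∃ (k : ℕ) (r : ℕ → R) (c : ℕ → C),
    0 < k ∧ r k = r 0 ∧
    (∀ t < k, (r t, c t) ∈ S ∧ (r (t + 1), c t) ∈ S) ∧
    (∀ s < k, ∀ t < k, s ≠ t → (r s, c s) ≠ (r t, c t)) ∧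
    (∀ s < k, ∀ t < k, s ≠ t → (r (s + 1), c s) ≠ (r (t + 1), c t)) ∧
    (∀ s < k, ∀ t < k, (r s, c s) ≠ (r (t + 1), c t)) ∧
    (∀ t < k, z (r t, c t) = 1 ∧ z (r (t + 1), c t) = -1) ∧
    (∀ e : R × C, (∀ t < k, e ≠ (r t, c t) ∧ e ≠ (r (t + 1), c t)) → z e = 0)

def BipGraph (S : Set (R × C)) : SimpleGraph (R ⊕ C) where
  Adj := Adj S
  symm := by
    constructor
    rintro v w ⟨e, he, ⟨h1, h2⟩ | ⟨h1, h2⟩⟩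
    · exact ⟨e, he, Or.inr ⟨h2, h1⟩⟩
    · exact ⟨e, he, Or.inl ⟨h2, h1⟩⟩
  loopless := by
    constructor
    rintro v ⟨e, he, ⟨h1, h2⟩ | ⟨h1, h2⟩⟩ <;> rw [h1] at h2 <;> cases h2

lemma getVert_injOn' {V : Type*} {G : SimpleGraph V} {u v : V} (p : G.Walk u v)
    (hp : p.IsPath) : ∀ i ≤ p.length, ∀ j ≤ p.length, p.getVert i = p.getVert j → i = j := by
  induction p with
  | nil => intro i hi j hj _; simp at hi hj; omega
  | cons h q ih =>
    rw [SimpleGraph.Walk.cons_isPath_iff] at hp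
    intro i hi j hj hij
    match i, j with
    | 0, 0 => rfl
    | i + 1, j + 1 =>
      simp only [SimpleGraph.Walk.getVert_cons_succ] at hij
      simp only [SimpleGraph.Walk.length_cons] at hi hj
      have := ih hp.1 i (by omega) j (by omega) hij
      omega
    | 0, j + 1 =>
      exfalso
      simp only [SimpleGraph.Walk.getVert_zero, SimpleGraph.Walk.getVert_cons_succ] at hij
      simp only [SimpleGraph.Walk.length_cons] at hj
      exact hp.2 (SimpleGraph.Walk.mem_support_iff_exists_getVert.mpr ⟨j, hij.symm, by omega⟩)
    | i + 1, 0 =>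
      exfalso
      simp only [SimpleGraph.Walk.getVert_zero, SimpleGraph.Walk.getVert_cons_succ] at hij
      simp only [SimpleGraph.Walk.length_cons] at hi
      exact hp.2 (SimpleGraph.Walk.mem_support_iff_exists_getVert.mpr ⟨i, hij, by omega⟩)

lemma exists_cycle {A B : Type*} (E Q : Set (A × B)) (hQE : Q ⊆ E)
    (a : A) (b : B) (hq : (a, b) ∈ Q)
    (hconn : Conn (E \ Q) (Sum.inr b) (Sum.inl a)) :
    ∃ z : A × B → ℝ, IsDBCycle E z ∧ z (a, b) = 1 ∧ ∀ e ∈ Q, e ≠ (a, b) → z e = 0 := by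
  classical
  set S : Set (A × B) := E \ Q with hS
  have hreach : (BipGraph S).Reachable (Sum.inr b) (Sum.inl a) :=
    (SimpleGraph.reachable_iff_reflTransGen _ _).mpr hconn
  obtain ⟨w⟩ := hreach
  obtain ⟨p, hp⟩ := w.toPath
  set n := p.length with hn
  -- parity of vertices along the path
  have parity : ∀ i ≤ n, (Even i → ∃ x, p.getVert i = Sum.inr x) ∧
      (¬ Even i → ∃ x, p.getVert i = Sum.inl x) := by
    intro i
    induction i with
    | zero => intro _; exact ⟨fun _ => ⟨b, p.getVert_zero⟩, fun h => absurd Even.zero h⟩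
    | succ i ih =>
      intro hi
      have hlt : i < n := by omega
      have hadj : Adj S (p.getVert i) (p.getVert (i + 1)) := p.adj_getVert_succ hlt
      obtain ⟨e, _, ⟨h1, h2⟩ | ⟨h1, h2⟩⟩ := hadj
      · constructor
        · intro _; exact ⟨e.2, h2⟩
        · intro hodd
          exfalso
          have hev : Even i := by
            rcases Nat.even_or_odd i with h | h
            · exact h
            · exact absurd (Odd.add_one h) hodd
          obtain ⟨x, hx⟩ := (ih (by omega)).1 hev
          rw [h1] at hx; cases hx
      · constructor
        · intro hev
          exfalso
          have : ¬ Even i := by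
            intro h; exact (Nat.even_add_one.mp hev) h
          obtain ⟨x, hx⟩ := (ih (by omega)).2 this
          rw [h1] at hx; cases hx
        · intro _; exact ⟨e.1, h2⟩
  have hend : p.getVert n = Sum.inl a := p.getVert_length
  have hodd : ¬ Even n := by
    intro h
    obtain ⟨x, hx⟩ := (parity n le_rfl).1 h
    rw [hend] at hx; cases hx
  obtain ⟨m, hm⟩ := Nat.not_even_iff_odd.mp hodd
  set k := m + 1 with hk
  have hnk : n = 2 * k - 1 := by omega
  -- the row/column sequences
  set c : ℕ → B := fun t =>
    if h : ∃ x, p.getVert (2 * t) = Sum.inr x then h.choose else b with hcdef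
  set r : ℕ → A := fun t =>
    if t = 0 then a else
      if h : ∃ x, p.getVert (2 * t - 1) = Sum.inl x then h.choose else a with hrdef
  have hc : ∀ t < k, p.getVert (2 * t) = Sum.inr (c t) := by
    intro t ht
    have hle : 2 * t ≤ n := by omega
    have hex : ∃ x, p.getVert (2 * t) = Sum.inr x := (parity _ hle).1 ⟨t, by ring⟩
    simp only [hcdef, dif_pos hex]
    exact hex.choose_spec
  have hr : ∀ t, 1 ≤ t → t ≤ k → p.getVert (2 * t - 1) = Sum.inl (r t) := by
    intro t h1 h2
    have hle : 2 * t - 1 ≤ n := by omega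
    have hodd' : ¬ Even (2 * t - 1) := by
      rw [Nat.not_even_iff_odd]; exact ⟨t - 1, by omega⟩
    have hex : ∃ x, p.getVert (2 * t - 1) = Sum.inl x := (parity _ hle).2 hodd'
    simp only [hrdef, if_neg (by omega : ¬ t = 0), dif_pos hex]
    exact hex.choose_spec
  have hr0 : r 0 = a := by simp [hrdef]
  have hrk : r k = a := by
    have := hr k (by omega) le_rfl
    rw [show 2 * k - 1 = n by omega, hend] at this
    exact (Sum.inl.injEq _ _ ▸ this.symm :)
  have hc0 : c 0 = b := by
    have := hc 0 (by omega)
    rw [Nat.mul_zero, p.getVert_zero] at this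
    exact (Sum.inr.injEq _ _ ▸ this :).symm
  -- edges
  have hedge2 : ∀ t < k, (r (t + 1), c t) ∈ S := by
    intro t ht
    have hlt : 2 * t < n := by omega
    have hadj : Adj S (p.getVert (2 * t)) (p.getVert (2 * t + 1)) := p.adj_getVert_succ hlt
    rw [hc t ht, show 2 * t + 1 = 2 * (t + 1) - 1 by omega, hr (t + 1) (by omega) (by omega)]
      at hadj
    obtain ⟨e, he, ⟨h1, h2⟩ | ⟨h1, h2⟩⟩ := hadj
    · cases h1
    · have e1 : e.1 = r (t + 1) := (Sum.inl.injEq _ _ ▸ h2 :).symm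
      have e2 : e.2 = c t := (Sum.inr.injEq _ _ ▸ h1 :).symm
      rwa [← e1, ← e2, Prod.mk.eta]
  have hedge1 : ∀ t, 1 ≤ t → t < k → (r t, c t) ∈ S := by
    intro t h1 ht
    have hlt : 2 * t - 1 < n := by omega
    have hadj : Adj S (p.getVert (2 * t - 1)) (p.getVert (2 * t - 1 + 1)) :=
      p.adj_getVert_succ hlt
    rw [hr t h1 (by omega), show 2 * t - 1 + 1 = 2 * t by omega, hc t ht] at hadj
    obtain ⟨e, he, ⟨h1', h2'⟩ | ⟨h1', h2'⟩⟩ := hadj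
    · have e1 : e.1 = r t := (Sum.inl.injEq _ _ ▸ h1' :).symm
      have e2 : e.2 = c t := (Sum.inr.injEq _ _ ▸ h2' :).symm
      rwa [← e1, ← e2, Prod.mk.eta]
    · cases h2'
  -- injectivity
  have inj := getVert_injOn' p hp
  have hcinj : ∀ s < k, ∀ t < k, c s = c t → s = t := by
    intro s hs t ht hst
    have h1 := hc s hs
    have h2 := hc t ht
    rw [hst] at h1
    have := inj (2 * s) (by omega) (2 * t) (by omega) (h1.trans h2.symm)
    omega
  have hcross : ∀ s < k, ∀ t < k, (r s, c s) ≠ (r (t + 1), c t) := by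
    intro s hs t ht heq
    rw [Prod.mk.injEq] at heq
    have hst : s = t := hcinj s hs t ht heq.2
    subst hst
    rcases Nat.eq_zero_or_pos s with h0 | hpos
    · subst h0
      have : (a, b) ∈ S := by
        have := hedge2 0 hs
        rwa [← heq.1, hr0, hc0] at this
      exact this.2 hq
    · have h1 := hr s hpos hs.le
      have h2 := hr (s + 1) (by omega) (by omega)
      rw [heq.1] at h1
      have := inj (2 * s - 1) (by omega) (2 * (s + 1) - 1) (by omega) (h1.trans h2.symm)
      omega
  -- the cycle vector
  set z : A × B → ℝ := fun e =>
    if ∃ t, t < k ∧ e = (r t, c t) then 1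
    else if ∃ t, t < k ∧ e = (r (t + 1), c t) then -1 else 0 with hzdef
  have hz1 : ∀ t < k, z (r t, c t) = 1 := by
    intro t ht
    simp only [hzdef]
    rw [if_pos ⟨t, ht, rfl⟩]
  have hz2 : ∀ t < k, z (r (t + 1), c t) = -1 := by
    intro t ht
    simp only [hzdef]
    rw [if_neg, if_pos ⟨t, ht, rfl⟩]
    rintro ⟨s, hs, hse⟩
    exact hcross s hs t ht hse.symm
  have hz0 : ∀ e : A × B, (∀ t < k, e ≠ (r t, c t) ∧ e ≠ (r (t + 1), c t)) → z e = 0 := by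
    intro e he
    simp only [hzdef]
    rw [if_neg, if_neg]
    · rintro ⟨t, ht, hte⟩; exact (he t ht).2 hte
    · rintro ⟨t, ht, hte⟩; exact (he t ht).1 hte
  refine ⟨z, ⟨k, r, c, by omega, hrk.trans hr0.symm, ?_, ?_, ?_, hcross, fun t ht => ⟨hz1 t ht, hz2 t ht⟩, hz0⟩, ?_, ?_⟩
  · intro t ht
    refine ⟨?_, (hedge2 t ht).1⟩
    rcases Nat.eq_zero_or_pos t with h0 | hpos
    · subst h0; rw [hr0, hc0]; exact hQE hq
    · exact (hedge1 t hpos ht).1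
  · intro s hs t ht hst heq
    rw [Prod.mk.injEq] at heq
    exact hst (hcinj s hs t ht heq.2)
  · intro s hs t ht hst heq
    rw [Prod.mk.injEq] at heq
    exact hst (hcinj s hs t ht heq.2)
  · have : (a, b) = (r 0, c 0) := by rw [hr0, hc0]
    rw [this]; exact hz1 0 (by omega)
  · intro e heQ hne
    apply hz0
    intro t ht
    constructor
    · rcases Nat.eq_zero_or_pos t with h0 | hpos
      · subst h0; rw [hr0, hc0]; exact hne
      · intro h; exact (hedge1 t hpos ht).2 (h ▸ heQ)
    · intro h; exact (hedge2 t ht).2 (h ▸ heQ)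

/-- If deleting the edges of `Q` keeps every connected component of the bipartite
graph `(A, B, E)` connected, then every prescription `y` of values on `Q` is matched
by some vector of the cycle space of `(A, B, E)`. -/
theorem stmt7 {A B : Type*} [Fintype A] [Fintype B]
    (E Q : Set (A × B)) (hQE : Q ⊆ E)
    (hconn : ∀ D : Set (A ⊕ B), IsCC E D → ConnectedOn (E \ Q) D)
    (y : A × B → ℝ) :
    ∃ z ∈ Submodule.span ℝ {z : A × B → ℝ | IsDBCycle E z},
      ∀ e ∈ Q, z e = y e := by
  classical
  have key : ∀ q : A × B, ∃ z : A × B → ℝ,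
      q ∈ Q → IsDBCycle E z ∧ z q = 1 ∧ ∀ e ∈ Q, e ≠ q → z e = 0 := by
    intro q
    by_cases hq : q ∈ Q
    · obtain ⟨a, b⟩ := q
      have h2 : Conn E (Sum.inl a) (Sum.inr b) :=
        Relation.ReflTransGen.single ⟨(a, b), hQE hq, Or.inl ⟨rfl, rfl⟩⟩
      have hcc : Conn (E \ Q) (Sum.inr b) (Sum.inl a) :=
        hconn _ ⟨Sum.inl a, rfl⟩ _ h2 _ Relation.ReflTransGen.refl
      obtain ⟨z, hz⟩ := exists_cycle E Q hQE a b hq hcc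
      exact ⟨z, fun _ => hz⟩
    · exact ⟨0, fun h => absurd h hq⟩
  choose f hf using key
  set Qf : Finset (A × B) := Set.toFinset Q with hQf
  refine ⟨∑ q ∈ Qf, y q • f q, ?_, ?_⟩
  · apply Submodule.sum_mem
    intro q hqf
    have hq : q ∈ Q := by rwa [hQf, Set.mem_toFinset] at hqf
    exact Submodule.smul_mem _ _ (Submodule.subset_span (hf q hq).1)
  · intro e he
    rw [Finset.sum_apply]
    rw [Finset.sum_eq_single e]
    · simp only [Pi.smul_apply, smul_eq_mul]
      rw [(hf e he).2.1, mul_one]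
    · intro q hqf hne
      have hq : q ∈ Q := by rwa [hQf, Set.mem_toFinset] at hqf
      simp only [Pi.smul_apply, smul_eq_mul]
      rw [(hf q hq).2.2 e he (Ne.symm hne), mul_zero]
    · intro hne
      exact absurd (by rwa [hQf, Set.mem_toFinset] : e ∈ Qf) hne
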